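/- Fix β ∈ (0,1), r ∈ (0,1), θ ∈ (0,1) with (1−θ)/2 < β < 1−θ. Then r > ρ*_θ(β) implies (1−θ)/2 − δ(β,r) > 0, i.e., the classification-error exponent (1−θ)/2 − δ(β,r) is strictly positive exactly in the Region of Possibility. -/

import Mathlib

/-- The standard phase boundary function. -/
noncomputable def rho (b : ℝ) : ℝ :=
  if b ≤ 1 / 2 then 0
  else if b < 3 / 4 then b - 1 / 2
  else (1 - Real.sqrt (1 - b)) ^ 2

/-- The rescaled phase boundary. -/
noncomputable def rhoStar (θ β : ℝ) : ℝ := (1 - θ) * rho (β / (1 - θ))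

/-- The exponent function `δ(β, r)`. -/
noncomputable def deltaExp (β r : ℝ) : ℝ :=
  if r ≤ β / 3 then β - r
  else if r < β then (β + r) ^ 2 / (8 * r)
  else β / 2

set_option maxHeartbeats 1600000 in
/-- For `β, r, θ ∈ (0,1)` with `(1-θ)/2 < β < 1-θ`, the classification-error
exponent `(1-θ)/2 - δ(β,r)` is strictly positive exactly when `r > ρ*_θ(β)`,
i.e., exactly in the Region of Possibility. -/
theorem error_exponent_positive_iff (β r θ : ℝ)
    (hβ : β ∈ Set.Ioo (0 : ℝ) 1) (hr : r ∈ Set.Ioo (0 : ℝ) 1)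
    (hθ : θ ∈ Set.Ioo (0 : ℝ) 1)
    (h1 : (1 - θ) / 2 < β) (h2 : β < 1 - θ) :
    rhoStar θ β < r ↔ 0 < (1 - θ) / 2 - deltaExp β r := by
  obtain ⟨hβ0, hβ1⟩ := hβ
  obtain ⟨hr0, hr1⟩ := hr
  obtain ⟨hθ0, hθ1⟩ := hθ
  obtain ⟨t, ht_eq⟩ : ∃ t : ℝ, 1 - θ = t := ⟨_, rfl⟩
  rw [ht_eq] at h1 h2
  rw [rhoStar, ht_eq]
  have ht0 : 0 < t := by linarith
  have h12 : ¬ (β / t ≤ 1 / 2) := by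
    rw [not_le, lt_div_iff₀ ht0]; linarith
  rw [rho, if_neg h12]
  by_cases hb34 : β / t < 3 / 4
  · rw [if_pos hb34]
    have hb34' : β < 3 / 4 * t := (div_lt_iff₀ ht0).mp hb34
    have hρ : t * (β / t - 1 / 2) = β - t / 2 := by field_simp
    rw [hρ]
    unfold deltaExp
    by_cases hc1 : r ≤ β / 3
    · rw [if_pos hc1]
      constructor <;> intro h <;> linarith
    · rw [if_neg hc1]
      push_neg at hc1
      by_cases hc2 : r < β
      · rw [if_pos hc2]
        have h8 : (0 : ℝ) < 8 * r := by linarith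
        constructor <;> intro h
        · rw [sub_pos, div_lt_iff₀ h8]
          nlinarith [mul_pos (show (0:ℝ) < r - β / 3 by linarith)
            (show (0:ℝ) < 3 * β - r by linarith), mul_pos ht0 hr0]
        · linarith
      · rw [if_neg hc2]
        push_neg at hc2
        constructor <;> intro h <;> linarith
  · rw [if_neg hb34]
    push_neg at hb34
    have hb34' : 3 / 4 * t ≤ β := (le_div_iff₀ ht0).mp hb34
    have hβt : β < t := h2
    have hnn : 0 ≤ 1 - β / t := by
      have : β / t < 1 := (div_lt_one ht0).mpr hβt
      linarith
    obtain ⟨s, hs_eq, hs0, hs2⟩ :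
        ∃ s : ℝ, Real.sqrt (1 - β / t) = s ∧ 0 < s ∧ s ^ 2 = 1 - β / t := by
      refine ⟨_, rfl, Real.sqrt_pos.mpr ?_, Real.sq_sqrt hnn⟩
      have : β / t < 1 := (div_lt_one ht0).mpr hβt
      linarith
    rw [hs_eq]
    have hβs : β = t * (1 - s ^ 2) := by rw [hs2]; field_simp; ring
    have hs_half : s ≤ 1 / 2 := by nlinarith [hb34', hβs, ht0, hs0]
    clear hs_eq hs2 hnn h12 hb34
    unfold deltaExp
    by_cases hc1 : r ≤ β / 3
    · rw [if_pos hc1]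
      apply iff_of_false
      · rw [not_lt]
        nlinarith [mul_nonneg (mul_nonneg ht0.le (show (0:ℝ) ≤ 1 - s by linarith))
          (show (0:ℝ) ≤ 1 - 2 * s by linarith), hβs, hc1]
      · rw [not_lt]
        linarith
    · rw [if_neg hc1]
      push_neg at hc1
      by_cases hc2 : r < β
      · rw [if_pos hc2]
        have h8 : (0 : ℝ) < 8 * r := by linarith
        rw [sub_pos, div_lt_iff₀ h8]
        rw [hβs] at hc1 hc2 ⊢
        have key : t / 2 * (8 * r) - (t * (1 - s ^ 2) + r) ^ 2
            = (r - t * (1 - s) ^ 2) * (t * (1 + s) ^ 2 - r) := by ring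
        have hupper : r < t * (1 + s) ^ 2 := by
          nlinarith [mul_nonneg (mul_nonneg ht0.le hs0.le)
            (show (0:ℝ) ≤ 1 + s by linarith)]
        constructor <;> intro h
        · nlinarith [mul_pos (show (0:ℝ) < r - t * (1 - s) ^ 2 by linarith)
            (show (0:ℝ) < t * (1 + s) ^ 2 - r by linarith), key]
        · by_contra h'
          push_neg at h'
          nlinarith [mul_nonneg (show (0:ℝ) ≤ t * (1 - s) ^ 2 - r by linarith)
            (show (0:ℝ) ≤ t * (1 + s) ^ 2 - r by linarith), key]
      · rw [if_neg hc2]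
        push_neg at hc2
        constructor <;> intro h
        · linarith
        · nlinarith [mul_pos (mul_pos ht0 hs0) (show (0:ℝ) < 1 - s by linarith),
            hβs, hc2]
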